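/- Let N ⊆ ℝ^m be a nonempty closed set, p ∈ ℝ^m \ N with exactly two nearest points q₁ ≠ q₂ in N, and set N_j := N ∩ { y : |q_j - y| ≤ (1/4)|q₁-q₂| }. Then the function f := d_{N₁} - d_{N₂} is differentiable at p with gradient ∇f(p) = (p-q₁)/|p-q₁| - (p-q₂)/|p-q₂|, and this gradient is nonzero. -/

import Mathlib

open Set Metric

/-- The set of nearest points of `N` to `x`. -/
def nearestPts {E : Type*} [MetricSpace E] (N : Set E) (x : E) : Set E :=
  {q ∈ N | dist q x = infDist x N}

section Aux

variable {E : Type*} [NormedAddCommGroup E] [InnerProductSpace ℝ E]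

local notation "⟪" x ", " y "⟫" => @inner ℝ _ _ x y

lemma norm_convex_aux (a h : E) (ha : a ≠ 0) :
    ‖a‖ + ⟪‖a‖⁻¹ • a, h⟫ ≤ ‖a + h‖ := by
  have hna : (0:ℝ) < ‖a‖ := norm_pos_iff.mpr ha
  have h1 : ⟪a, a + h⟫ ≤ ‖a‖ * ‖a + h‖ := real_inner_le_norm a (a + h)
  rw [inner_add_right, real_inner_self_eq_norm_sq] at h1
  rw [real_inner_smul_left]
  have h2 : ‖a‖⁻¹ * ⟪a, h⟫ ≤ ‖a + h‖ - ‖a‖ := by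
    rw [inv_mul_le_iff₀ hna]
    nlinarith [h1]
  linarith

variable [ProperSpace E]

omit [InnerProductSpace ℝ E] in
lemma nearest_cont_aux (A : Set E) (hA : IsClosed A) (p q : E)
    (hq : nearestPts A p = {q}) (ε : ℝ) (hε : 0 < ε) :
    ∃ δ > 0, ∀ y, dist y p < δ → ∀ q' ∈ nearestPts A y, dist q' q < ε := by
  have hqm : q ∈ nearestPts A p := by rw [hq]; rfl
  obtain ⟨hqA, hqd⟩ := hqm
  set d := infDist p A with hd
  set K : Set E := (A ∩ {z | ε ≤ dist q z}) ∩ closedBall p (d + 2) with hK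
  have hKcl : IsClosed K := by
    exact (hA.inter (isClosed_le continuous_const (by fun_prop))).inter isClosed_closedBall
  have hKc : IsCompact K :=
    (isCompact_closedBall p (d + 2)).of_isClosed_subset hKcl inter_subset_right
  by_cases hKne : K.Nonempty
  · obtain ⟨z₀, hz₀K, hz₀min⟩ := hKc.exists_isMinOn hKne
      (Continuous.continuousOn (by fun_prop : Continuous fun z : E => dist p z))
    set d' := dist p z₀ with hd'
    have hz₀A : z₀ ∈ A := hz₀K.1.1
    have hdd' : d < d' := by
      rcases lt_or_eq_of_le (infDist_le_dist_of_mem (x := p) hz₀A) with h | h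
      · exact h
      · exfalso
        have : z₀ ∈ nearestPts A p := ⟨hz₀A, by rw [dist_comm]; exact h.symm⟩
        rw [hq, mem_singleton_iff] at this
        subst this
        have := hz₀K.1.2
        simp only [mem_setOf_eq, dist_self] at this
        linarith
    refine ⟨min 1 ((d' - d) / 2), lt_min one_pos (by linarith), fun y hy q' hq' => ?_⟩
    obtain ⟨hq'A, hq'd⟩ := hq'
    by_contra hcon
    push_neg at hcon
    have h1 : dist q' y ≤ dist y q := by
      rw [hq'd]; exact infDist_le_dist_of_mem hqA
    have hyq : dist y q ≤ dist y p + d := by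
      calc dist y q ≤ dist y p + dist p q := dist_triangle y p q
        _ = dist y p + d := by rw [dist_comm p q, hqd]
    have h2 : dist q' p < d + 2 * (min 1 ((d' - d) / 2)) := by
      calc dist q' p ≤ dist q' y + dist y p := dist_triangle q' y p
        _ ≤ dist y q + dist y p := by linarith
        _ ≤ (dist y p + d) + dist y p := by linarith
        _ < d + 2 * (min 1 ((d' - d) / 2)) := by linarith [hy]
    have hq'K : q' ∈ K := by
      refine ⟨⟨hq'A, by simpa [dist_comm] using hcon⟩, mem_closedBall.mpr ?_⟩
      have : min 1 ((d' - d) / 2) ≤ 1 := min_le_left _ _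
      rw [dist_comm] at h2 ⊢
      linarith [h2.le]
    have := hz₀min hq'K
    simp only [mem_setOf_eq] at this
    have hmin : min 1 ((d' - d) / 2) ≤ (d' - d) / 2 := min_le_right _ _
    have : d' ≤ dist p q' := this
    rw [dist_comm] at h2
    linarith
  · refine ⟨1, one_pos, fun y hy q' hq' => ?_⟩
    obtain ⟨hq'A, hq'd⟩ := hq'
    by_contra hcon
    push_neg at hcon
    apply hKne
    refine ⟨q', ⟨hq'A, by simpa [dist_comm] using hcon⟩, mem_closedBall.mpr ?_⟩
    have h1 : dist q' y ≤ dist y q := by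
      rw [hq'd]; exact infDist_le_dist_of_mem hqA
    have hyq : dist y q ≤ dist y p + d := by
      calc dist y q ≤ dist y p + dist p q := dist_triangle y p q
        _ = dist y p + d := by rw [dist_comm p q, hqd]
    calc dist q' p ≤ dist q' y + dist y p := dist_triangle q' y p
      _ ≤ (dist y p + d) + dist y p := by linarith
      _ ≤ d + 2 := by linarith [hy.le]

lemma grad_infDist_aux (A : Set E) (hA : IsClosed A) (hAne : A.Nonempty) (p q : E)
    (hp : p ∉ A) (hq : nearestPts A p = {q}) :
    HasGradientAt (fun x => infDist x A) (‖p - q‖⁻¹ • (p - q)) p := by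
  have hqm : q ∈ nearestPts A p := by rw [hq]; exact rfl
  obtain ⟨hqA, hqd⟩ := hqm
  have hd0 : 0 < infDist p A := (hA.notMem_iff_infDist_pos hAne).mp hp
  set d := infDist p A with hddef
  have hpq : p - q ≠ 0 := by
    intro h; exact hp (by rwa [sub_eq_zero.mp h])
  have hpqn : ‖p - q‖ = d := by rw [← dist_eq_norm, dist_comm]; exact hqd
  set v : E := ‖p - q‖⁻¹ • (p - q) with hv
  rw [hasGradientAt_iff_isLittleO, Asymptotics.isLittleO_iff]
  intro c hc
  set ψ : E → E := fun z => ‖p - z‖⁻¹ • (p - z) with hψ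
  have hψq : ψ q = v := rfl
  have hψcont : ContinuousAt ψ q := by
    apply ContinuousAt.smul
    · exact ((continuousAt_const.sub continuousAt_id).norm).inv₀ (by simpa using hpq)
    · exact continuousAt_const.sub continuousAt_id
  obtain ⟨ε₁, hε₁, hψball⟩ := Metric.continuousAt_iff.mp hψcont c hc
  obtain ⟨δ₁, hδ₁, hnear⟩ := nearest_cont_aux A hA p q hq ε₁ hε₁
  set φ : E → E := fun y => ‖y - q‖⁻¹ • (y - q) with hφ
  have hφp : φ p = v := rfl
  have hφcont : ContinuousAt φ p := by
    apply ContinuousAt.smul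
    · exact ((continuousAt_id.sub continuousAt_const).norm).inv₀ (by simpa using hpq)
    · exact continuousAt_id.sub continuousAt_const
  obtain ⟨δ₂, hδ₂, hφball⟩ := Metric.continuousAt_iff.mp hφcont c hc
  set δ := min (min δ₁ δ₂) (d / 2) with hδ
  have hδpos : 0 < δ := lt_min (lt_min hδ₁ hδ₂) (by linarith)
  filter_upwards [Metric.ball_mem_nhds p hδpos] with y hy
  rw [Metric.mem_ball] at hy
  have hyp1 : dist y p < δ₁ := hy.trans_le ((min_le_left _ _).trans (min_le_left _ _))
  have hyp2 : dist y p < δ₂ := hy.trans_le ((min_le_left _ _).trans (min_le_right _ _))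
  have hypd : dist y p < d / 2 := hy.trans_le (min_le_right _ _)
  obtain ⟨q', hq'A, hq'eq⟩ := hA.exists_infDist_eq_dist hAne y
  have hq'near : q' ∈ nearestPts A y := ⟨hq'A, by rw [dist_comm]; exact hq'eq.symm⟩
  have hq'q : dist q' q < ε₁ := hnear y hyp1 q' hq'near
  have hψq' : ‖ψ q' - v‖ < c := by
    have := hψball hq'q
    rwa [hψq, dist_eq_norm] at this
  have hφy : ‖φ y - v‖ < c := by
    have := hφball hyp2
    rwa [hφp, dist_eq_norm] at this
  have hpq' : p - q' ≠ 0 := by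
    intro h; exact hp (by rwa [sub_eq_zero.mp h])
  have hyq : y - q ≠ 0 := by
    intro h
    have h' : dist y p = d := by rw [sub_eq_zero.mp h]; exact hqd
    linarith
  have hlow : d + ⟪ψ q', y - p⟫ ≤ infDist y A := by
    have h1 : ‖p - q'‖ + ⟪ψ q', y - p⟫ ≤ ‖(p - q') + (y - p)‖ := norm_convex_aux _ _ hpq'
    have h2 : (p - q') + (y - p) = y - q' := by abel
    have h3 : d ≤ ‖p - q'‖ := by
      rw [← dist_eq_norm]; exact infDist_le_dist_of_mem hq'A
    rw [h2] at h1
    rw [hq'eq, dist_eq_norm]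
    linarith
  have hupp : infDist y A ≤ d + ⟪φ y, y - p⟫ := by
    have h1 : ‖y - q‖ + ⟪φ y, p - y⟫ ≤ ‖(y - q) + (p - y)‖ := norm_convex_aux _ _ hyq
    have h2 : (y - q) + (p - y) = p - q := by abel
    rw [h2, hpqn] at h1
    have h3 : infDist y A ≤ ‖y - q‖ := by
      rw [← dist_eq_norm]; exact infDist_le_dist_of_mem hqA
    have h4 : ⟪φ y, p - y⟫ = -⟪φ y, y - p⟫ := by
      rw [show p - y = -(y - p) by abel, inner_neg_right]
    rw [h4] at h1
    linarith
  have hest1 : |⟪ψ q' - v, y - p⟫| ≤ c * ‖y - p‖ := by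
    calc |⟪ψ q' - v, y - p⟫| ≤ ‖ψ q' - v‖ * ‖y - p‖ := abs_real_inner_le_norm _ _
      _ ≤ c * ‖y - p‖ := by
        apply mul_le_mul_of_nonneg_right hψq'.le (norm_nonneg _)
  have hest2 : |⟪φ y - v, y - p⟫| ≤ c * ‖y - p‖ := by
    calc |⟪φ y - v, y - p⟫| ≤ ‖φ y - v‖ * ‖y - p‖ := abs_real_inner_le_norm _ _
      _ ≤ c * ‖y - p‖ := by
        apply mul_le_mul_of_nonneg_right hφy.le (norm_nonneg _)
  have hsplit1 : ⟪ψ q', y - p⟫ = ⟪v, y - p⟫ + ⟪ψ q' - v, y - p⟫ := by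
    rw [inner_sub_left]; ring
  have hsplit2 : ⟪φ y, y - p⟫ = ⟪v, y - p⟫ + ⟪φ y - v, y - p⟫ := by
    rw [inner_sub_left]; ring
  rw [Real.norm_eq_abs, abs_le]
  rw [hsplit1] at hlow
  rw [hsplit2] at hupp
  constructor
  · have := abs_le.mp hest1
    linarith [this.1]
  · linarith [(abs_le.mp hest2).1, (abs_le.mp hest2).2]

end Aux

/-- If `p ∉ N` has exactly two nearest points `q₁ ≠ q₂`, and
`N_j := N ∩ {y : dist(q_j,y) ≤ (1/4)·dist(q₁,q₂)}`, then `f := d_{N₁} - d_{N₂}` is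
differentiable at `p` with gradient `(p-q₁)/‖p-q₁‖ - (p-q₂)/‖p-q₂‖ ≠ 0`. -/
theorem stmt_6 {m : ℕ} (N : Set (EuclideanSpace ℝ (Fin m)))
    (hN : IsClosed N) (hNne : N.Nonempty)
    (p q₁ q₂ : EuclideanSpace ℝ (Fin m)) (hp : p ∉ N) (hq12 : q₁ ≠ q₂)
    (hproj : nearestPts N p = {q₁, q₂})
    (N₁ N₂ : Set (EuclideanSpace ℝ (Fin m)))
    (hN₁ : N₁ = N ∩ {y | dist q₁ y ≤ (1/4) * dist q₁ q₂})
    (hN₂ : N₂ = N ∩ {y | dist q₂ y ≤ (1/4) * dist q₁ q₂}) :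
    HasGradientAt (fun x => infDist x N₁ - infDist x N₂)
      (‖p - q₁‖⁻¹ • (p - q₁) - ‖p - q₂‖⁻¹ • (p - q₂)) p ∧
    ‖p - q₁‖⁻¹ • (p - q₁) - ‖p - q₂‖⁻¹ • (p - q₂) ≠ 0 := by
  have hq₁m : q₁ ∈ nearestPts N p := by rw [hproj]; exact mem_insert _ _
  have hq₂m : q₂ ∈ nearestPts N p := by rw [hproj]; exact mem_insert_of_mem _ rfl
  obtain ⟨hq₁N, hq₁d⟩ := hq₁m
  obtain ⟨hq₂N, hq₂d⟩ := hq₂m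
  have hd12 : 0 < dist q₁ q₂ := dist_pos.mpr hq12
  have hd0 : 0 < infDist p N := (hN.notMem_iff_infDist_pos hNne).mp hp
  have hq₁N₁ : q₁ ∈ N₁ := by
    rw [hN₁]; exact ⟨hq₁N, by simp only [mem_setOf_eq, dist_self]; positivity⟩
  have hq₂N₂ : q₂ ∈ N₂ := by
    rw [hN₂]; exact ⟨hq₂N, by simp only [mem_setOf_eq, dist_self]; positivity⟩
  have hN₁c : IsClosed N₁ := by
    rw [hN₁]; exact hN.inter (isClosed_le (by fun_prop) continuous_const)
  have hN₂c : IsClosed N₂ := by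
    rw [hN₂]; exact hN.inter (isClosed_le (by fun_prop) continuous_const)
  have hsub₁ : N₁ ⊆ N := by rw [hN₁]; exact inter_subset_left
  have hsub₂ : N₂ ⊆ N := by rw [hN₂]; exact inter_subset_left
  have hp₁ : p ∉ N₁ := fun h => hp (hsub₁ h)
  have hp₂ : p ∉ N₂ := fun h => hp (hsub₂ h)
  have hinf₁ : infDist p N₁ = infDist p N := by
    apply le_antisymm
    · calc infDist p N₁ ≤ dist p q₁ := infDist_le_dist_of_mem hq₁N₁
        _ = infDist p N := by rw [dist_comm]; exact hq₁d
    · exact infDist_le_infDist_of_subset hsub₁ ⟨q₁, hq₁N₁⟩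
  have hinf₂ : infDist p N₂ = infDist p N := by
    apply le_antisymm
    · calc infDist p N₂ ≤ dist p q₂ := infDist_le_dist_of_mem hq₂N₂
        _ = infDist p N := by rw [dist_comm]; exact hq₂d
    · exact infDist_le_infDist_of_subset hsub₂ ⟨q₂, hq₂N₂⟩
  have hproj₁ : nearestPts N₁ p = {q₁} := by
    ext z
    simp only [mem_singleton_iff]
    constructor
    · rintro ⟨hzN₁, hzd⟩
      have hzm : z ∈ nearestPts N p := ⟨hsub₁ hzN₁, by rw [hzd, hinf₁]⟩
      rw [hproj] at hzm
      rcases hzm with h | h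
      · exact h
      · exfalso
        rw [hN₁] at hzN₁
        have := hzN₁.2
        rw [mem_singleton_iff] at h
        rw [h] at this
        simp only [mem_setOf_eq] at this
        linarith
    · rintro rfl
      exact ⟨hq₁N₁, by rw [hq₁d, hinf₁]⟩
  have hproj₂ : nearestPts N₂ p = {q₂} := by
    ext z
    simp only [mem_singleton_iff]
    constructor
    · rintro ⟨hzN₂, hzd⟩
      have hzm : z ∈ nearestPts N p := ⟨hsub₂ hzN₂, by rw [hzd, hinf₂]⟩
      rw [hproj] at hzm
      rcases hzm with h | h
      · exfalso
        rw [hN₂] at hzN₂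
        have := hzN₂.2
        rw [h] at this
        simp only [mem_setOf_eq] at this
        rw [dist_comm] at this
        linarith
      · exact h
    · rintro rfl
      exact ⟨hq₂N₂, by rw [hq₂d, hinf₂]⟩
  have hg₁ := grad_infDist_aux N₁ hN₁c ⟨q₁, hq₁N₁⟩ p q₁ hp₁ hproj₁
  have hg₂ := grad_infDist_aux N₂ hN₂c ⟨q₂, hq₂N₂⟩ p q₂ hp₂ hproj₂
  have hnorm₁ : ‖p - q₁‖ = infDist p N := by rw [← dist_eq_norm, dist_comm]; exact hq₁d
  have hnorm₂ : ‖p - q₂‖ = infDist p N := by rw [← dist_eq_norm, dist_comm]; exact hq₂d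
  constructor
  · rw [hasGradientAt_iff_hasFDerivAt, map_sub]
    exact (hg₁.hasFDerivAt).sub (hg₂.hasFDerivAt)
  · intro h
    rw [sub_eq_zero, hnorm₁, hnorm₂] at h
    have hne : (infDist p N)⁻¹ ≠ 0 := inv_ne_zero (ne_of_gt hd0)
    have : p - q₁ = p - q₂ := smul_right_injective _ hne h
    exact hq12 (by rw [← sub_sub_cancel p q₁, ← sub_sub_cancel p q₂, this])
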